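/- Let S_P be a combinatorial Rees matrix semigroup with P of one block (P(λ,i) = 1 iff (λ,i) ∈ Δ × J for some J ⊆ I, Δ ⊆ Λ). Then for any finite A ⊆ S_P^n and b ∈ S_P^n, b lies in the subsemigroup of S_P^n generated by A if and only if b ∈ A or there exist a₁, a₂ ∈ A such that a₁ · d · a₂ = b, where d is the product over all a ∈ A with a(i) ∈ J × Δ for all i with b(i) ≠ 0. -/

import Mathlib

/-- Elements of the combinatorial Rees matrix semigroup `S_P = (I × Λ) ∪ {0}`. -/
inductive RM (I Λ : Type*) where
  | zero : RM I Λ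
  | elt  : I → Λ → RM I Λ

/-- The multiplication of `S_P`: `[i,λ]·[j,μ] = [i,μ]` if `P(λ,j) = 1` and `0` otherwise,
with `0` a zero element. -/
def rmul {I Λ : Type*} (P : Λ → I → Bool) : RM I Λ → RM I Λ → RM I Λ
  | RM.elt i l, RM.elt j m => if P l j then RM.elt i m else RM.zero
  | _, _ => RM.zero


/-- Coordinatewise multiplication on the direct power `S_P ^ n`. -/
def pmul {I Λ : Type*} (P : Λ → I → Bool) {n : ℕ} (a b : Fin n → RM I Λ) : Fin n → RM I Λ :=
  fun i => rmul P (a i) (b i)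


/-- The product `a₁ ⋯ aₖ` of a nonempty list, given as head `a` and tail `l`,
with respect to a multiplication `mul`. -/
def listProd {α : Type*} (mul : α → α → α) : α → List α → α
  | a, [] => a
  | a, b :: l => mul a (listProd mul b l)

/-- If `P` has one block (witnessed by `J ⊆ I`, `Δ ⊆ Λ`), `A ⊆ S_P ^ n` is finite, and `L`
enumerates (without repetition, in some fixed order) those `a ∈ A` with `a i ∈ J × Δ` for
all coordinates `i` with `b i ≠ 0`, then `b` lies in the subsemigroup of `S_P ^ n`
generated by `A` (i.e. is a nonempty product of elements of `A`) iff `b ∈ A` or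
`a₁ · d · a₂ = b` for some `a₁, a₂ ∈ A`, where `d` is the product of `L`. -/
lemma coordProd {I Λ : Type*} (P : Λ → I → Bool) {n : ℕ}
    (g₀ : Fin n → RM I Λ) (gs : List (Fin n → RM I Λ)) (i : Fin n) :
    listProd (pmul P) g₀ gs i = listProd (rmul P) (g₀ i) (gs.map (fun g => g i)) := by
  induction gs generalizing g₀ with
  | nil => rfl
  | cons y l ih => simp [listProd, pmul, ih y]

lemma chainGood {I Λ : Type*} (P : Λ → I → Bool) (J : Set I) (Δ : Set Λ)
    (hP : ∀ (l : Λ) (i : I), P l i = true ↔ l ∈ Δ ∧ i ∈ J)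
    (xs : List (RM I Λ)) (a : I) (l : Λ) (hl : l ∈ Δ)
    (hxs : ∀ x ∈ xs, ∃ j ∈ J, ∃ d ∈ Δ, x = RM.elt j d)
    (j : I) (hj : j ∈ J) (m : Λ) :
    listProd (rmul P) (RM.elt a l) (xs ++ [RM.elt j m]) = RM.elt a m := by
  induction xs generalizing a l with
  | nil =>
    simp only [List.nil_append, listProd, rmul]
    rw [if_pos ((hP l j).2 ⟨hl, hj⟩)]
  | cons y ys ih =>
    obtain ⟨j', hj', d', hd', rfl⟩ := hxs y List.mem_cons_self
    have hrest := ih j' d' hd' (fun x hx => hxs x (List.mem_cons_of_mem _ hx))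
    rw [List.cons_append]
    show rmul P (RM.elt a l) (listProd (rmul P) (RM.elt j' d') (ys ++ [RM.elt j m])) = RM.elt a m
    rw [hrest]
    simp only [rmul]
    rw [if_pos ((hP l j').2 ⟨hl, hj'⟩)]

lemma chainStruct {I Λ : Type*} (P : Λ → I → Bool) (J : Set I) (Δ : Set Λ)
    (hP : ∀ (l : Λ) (i : I), P l i = true ↔ l ∈ Δ ∧ i ∈ J)
    (xs : List (RM I Λ)) (x₀ x₂ : RM I Λ) (a : I) (m : Λ)
    (h : listProd (rmul P) x₀ (xs ++ [x₂]) = RM.elt a m) :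
    (∃ l ∈ Δ, x₀ = RM.elt a l) ∧ (∀ x ∈ xs, ∃ j ∈ J, ∃ d ∈ Δ, x = RM.elt j d) ∧
      (∃ j ∈ J, x₂ = RM.elt j m) := by
  induction xs generalizing x₀ a with
  | nil =>
    simp only [List.nil_append, listProd] at h
    cases x₀ with
    | zero => simp [rmul] at h
    | elt i l =>
      cases x₂ with
      | zero => simp [rmul] at h
      | elt j m' =>
        simp only [rmul] at h
        split at h
        · rename_i hPlj
          obtain ⟨hl, hj⟩ := (hP l j).1 hPlj
          cases h
          exact ⟨⟨l, hl, rfl⟩, by simp, ⟨j, hj, rfl⟩⟩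
        · exact absurd h (by simp)
  | cons y ys ih =>
    rw [List.cons_append] at h
    replace h : rmul P x₀ (listProd (rmul P) y (ys ++ [x₂])) = RM.elt a m := h
    cases x₀ with
    | zero => simp [rmul] at h
    | elt i l =>
      cases hz : listProd (rmul P) y (ys ++ [x₂]) with
      | zero => rw [hz] at h; simp [rmul] at h
      | elt j' m' =>
        rw [hz] at h
        simp only [rmul] at h
        split at h
        · rename_i hPlj
          obtain ⟨hl, hj'⟩ := (hP l j').1 hPlj
          cases h
          obtain ⟨⟨d', hd', hy⟩, hys, hx₂⟩ := ih y j' hz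
          refine ⟨⟨l, hl, rfl⟩, ?_, hx₂⟩
          intro x hx
          rcases List.mem_cons.1 hx with rfl | hx
          · exact ⟨j', hj', d', hd', hy⟩
          · exact hys x hx
        · exact absurd h (by simp)

theorem stmt_12 {I Λ : Type*} (P : Λ → I → Bool) (J : Set I) (Δ : Set Λ)
    (hP : ∀ (l : Λ) (i : I), P l i = true ↔ l ∈ Δ ∧ i ∈ J)
    (n : ℕ) (A : Finset (Fin n → RM I Λ)) (b : Fin n → RM I Λ)
    (L : List (Fin n → RM I Λ)) (hnd : L.Nodup)
    (hL : ∀ x, x ∈ L ↔ x ∈ A ∧ ∀ i : Fin n, b i ≠ RM.zero →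
      ∃ j ∈ J, ∃ d ∈ Δ, x i = RM.elt j d) :
    (∃ (g₀ : Fin n → RM I Λ) (gs : List (Fin n → RM I Λ)),
        g₀ ∈ A ∧ (∀ x ∈ gs, x ∈ A) ∧ listProd (pmul P) g₀ gs = b) ↔
      (b ∈ A ∨ ∃ a₁ ∈ A, ∃ a₂ ∈ A, listProd (pmul P) a₁ (L ++ [a₂]) = b) := by
  constructor
  · rintro ⟨g₀, gs, hg₀, hgs, hprod⟩
    rcases List.eq_nil_or_concat gs with rfl | ⟨mid, gk, rfl⟩
    · left; simpa [listProd] using hprod ▸ hg₀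
    · rw [List.concat_eq_append] at hgs hprod
      right
      have hgk : gk ∈ A := hgs gk (by simp)
      -- coordinatewise product identity for the original chain
      have hco : ∀ i : Fin n,
          listProd (rmul P) (g₀ i) (mid.map (fun g => g i) ++ [gk i]) = b i := by
        intro i
        have := coordProd P g₀ (mid ++ [gk]) i
        rw [hprod] at this
        simpa using this.symm
      -- every middle element is in L
      have hmidL : ∀ x ∈ mid, x ∈ L := by
        intro x hx
        refine (hL x).2 ⟨hgs x (by simp [hx]), ?_⟩
        intro i hbi
        cases hbi' : b i with
        | zero => exact absurd hbi' hbi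
        | elt a m =>
          have h := hco i
          rw [hbi'] at h
          obtain ⟨-, hmidgood, -⟩ := chainStruct P J Δ hP _ _ _ _ _ h
          exact hmidgood (x i) (List.mem_map.2 ⟨x, hx, rfl⟩)
      refine ⟨g₀, hg₀, gk, hgk, ?_⟩
      funext i
      rw [coordProd P g₀ (L ++ [gk]) i, List.map_append, List.map_singleton]
      cases hbi : b i with
      | elt a m =>
        have h := hco i
        rw [hbi] at h
        obtain ⟨⟨l, hl, hg₀i⟩, -, ⟨j, hj, hgki⟩⟩ := chainStruct P J Δ hP _ _ _ _ _ h
        rw [hg₀i, hgki]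
        refine chainGood P J Δ hP _ _ _ hl ?_ j hj m
        intro x hx
        obtain ⟨y, hy, rfl⟩ := List.mem_map.1 hx
        exact ((hL y).1 hy).2 i (by rw [hbi]; exact fun h => nomatch h)
      | zero =>
        by_contra hne
        cases hz : listProd (rmul P) (g₀ i) (List.map (fun g => g i) L ++ [gk i]) with
        | zero => exact hne hz
        | elt a m =>
          obtain ⟨⟨l, hl, hg₀i⟩, hLgood, ⟨j, hj, hgki⟩⟩ := chainStruct P J Δ hP _ _ _ _ _ hz
          have h := hco i
          rw [hbi, hg₀i, hgki] at h
          rw [chainGood P J Δ hP _ _ _ hl ?_ j hj m] at h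
          · exact nomatch h
          · intro x hx
            obtain ⟨y, hy, rfl⟩ := List.mem_map.1 hx
            exact hLgood (y i) (List.mem_map.2 ⟨y, hmidL y hy, rfl⟩)
  · rintro (hb | ⟨a₁, ha₁, a₂, ha₂, hprod⟩)
    · exact ⟨b, [], hb, by simp, rfl⟩
    · refine ⟨a₁, L ++ [a₂], ha₁, ?_, hprod⟩
      intro x hx
      rcases List.mem_append.1 hx with hx | hx
      · exact ((hL x).1 hx).1
      · exact (List.mem_singleton.1 hx) ▸ ha₂
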